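/- Consider the tiling system with three tiles {Y, B, W} and forbidden patterns: Y directly left of B, B directly left of Y, any occurrence of W, and B directly below Y. Then the valid tilings are exactly: the all-Y tiling, the all-B tiling, and for each h ∈ ℤ the tiling c_h with c_h(x,y) = Y if y < h and B if y ≥ h. Consequently Sl_τ = {0}. -/

import Mathlib

/-- A finite pattern: a finite support in `ℤ²` together with tile data. -/
structure Pattern (T : Type) where
  support : Finset (ℤ × ℤ)
  data : ℤ × ℤ → T

/-- A tiling system: a finite set of finite forbidden patterns over the tile set `T`. -/
structure TilingSystem (T : Type) where
  F : Set (Pattern T)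
  finite : F.Finite

/-- A tiling is valid when no translate of a forbidden pattern appears in it. -/
def TilingSystem.Valid {T : Type} (τ : TilingSystem T) (c : ℤ × ℤ → T) : Prop :=
  ∀ p ∈ τ.F, ∀ u : ℤ × ℤ, ∃ n ∈ p.support, c (n + u) ≠ p.data n

/-- A vector `v` is a period of the tiling `c`. -/
def IsPeriod {T : Type} (c : ℤ × ℤ → T) (v : ℤ × ℤ) : Prop :=
  ∀ x : ℤ × ℤ, c (x + v) = c x

/-- The direction of a vector of `ℤ²`, an element of `ℚ ∪ {∞}` modelled as `Option ℚ`
(`none` being `∞`, obtained when the first coordinate vanishes). -/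
def dir (v : ℤ × ℤ) : Option ℚ :=
  if v.1 = 0 then none else some ((v.2 : ℚ) / (v.1 : ℚ))

/-- A tiling has slope `θ` when it has a nonzero period and all its nonzero
periods have direction `θ`. -/
def HasSlope {T : Type} (c : ℤ × ℤ → T) (θ : Option ℚ) : Prop :=
  (∃ v : ℤ × ℤ, v ≠ 0 ∧ IsPeriod c v ∧ dir v = θ) ∧
    ∀ v : ℤ × ℤ, v ≠ 0 → IsPeriod c v → dir v = θ

/-- The set of slopes of all valid tilings of a tiling system. -/
def TilingSystem.Slopes {T : Type} (τ : TilingSystem T) : Set (Option ℚ) :=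
  {θ : Option ℚ | ∃ c : ℤ × ℤ → T, τ.Valid c ∧ HasSlope c θ}

inductive Tile where
  | Y | B | W
deriving DecidableEq

/-- Forbidden pattern: a single `W`. -/
def pW : Pattern Tile := ⟨{(0, 0)}, fun _ => Tile.W⟩
/-- Forbidden pattern: `Y` directly left of `B`. -/
def pYB : Pattern Tile := ⟨{(0, 0), (1, 0)}, fun m => if m = (0, 0) then Tile.Y else Tile.B⟩
/-- Forbidden pattern: `B` directly left of `Y`. -/
def pBY : Pattern Tile := ⟨{(0, 0), (1, 0)}, fun m => if m = (0, 0) then Tile.B else Tile.Y⟩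
/-- Forbidden pattern: `Y` directly above `B`... here: `B` directly below `Y`. -/
def pBbelowY : Pattern Tile := ⟨{(0, 0), (0, 1)}, fun m => if m = (0, 0) then Tile.B else Tile.Y⟩

/-- The example tiling system with tiles `Y`, `B`, `W`. -/
def exampleSystem : TilingSystem Tile :=
  ⟨{pW, pYB, pBY, pBbelowY}, (Set.finite_singleton pBbelowY).insert pBY
    |>.insert pYB |>.insert pW⟩

section Aux

open Tile

lemma valid_iff' (c : ℤ × ℤ → Tile) : exampleSystem.Valid c ↔
    (∀ x : ℤ × ℤ, c x ≠ Tile.W) ∧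
    (∀ x : ℤ × ℤ, c x = Tile.Y → c (x + (1, 0)) ≠ Tile.B) ∧
    (∀ x : ℤ × ℤ, c x = Tile.B → c (x + (1, 0)) ≠ Tile.Y) ∧
    (∀ x : ℤ × ℤ, c x = Tile.B → c (x + (0, 1)) ≠ Tile.Y) := by
  constructor
  · intro h
    refine ⟨fun x => ?_, fun x hx => ?_, fun x hx => ?_, fun x hx => ?_⟩
    · obtain ⟨n, hn, hne⟩ := h pW (by simp [exampleSystem]) x
      simp only [pW, Finset.mem_singleton] at hn
      subst hn
      simpa [pW, Prod.mk_zero_zero] using hne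
    · obtain ⟨n, hn, hne⟩ := h pYB (by simp [exampleSystem]) x
      simp only [pYB, Finset.mem_insert, Finset.mem_singleton] at hn
      rcases hn with hn | hn <;> subst hn
      · exact absurd (by simpa using hx) (by simpa [pYB, Prod.mk_zero_zero] using hne)
      · intro hB
        exact hne (by simpa [pYB, add_comm] using hB)
    · obtain ⟨n, hn, hne⟩ := h pBY (by simp [exampleSystem]) x
      simp only [pBY, Finset.mem_insert, Finset.mem_singleton] at hn
      rcases hn with hn | hn <;> subst hn
      · exact absurd (by simpa using hx) (by simpa [pBY, Prod.mk_zero_zero] using hne)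
      · intro hY
        exact hne (by simpa [pBY, add_comm] using hY)
    · obtain ⟨n, hn, hne⟩ := h pBbelowY (by simp [exampleSystem]) x
      simp only [pBbelowY, Finset.mem_insert, Finset.mem_singleton] at hn
      rcases hn with hn | hn <;> subst hn
      · exact absurd (by simpa using hx) (by simpa [pBbelowY, Prod.mk_zero_zero] using hne)
      · intro hY
        exact hne (by simpa [pBbelowY, add_comm] using hY)
  · rintro ⟨h1, h2, h3, h4⟩ p hp u
    simp only [exampleSystem, Set.mem_insert_iff, Set.mem_singleton_iff] at hp
    rcases hp with rfl | rfl | rfl | rfl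
    · exact ⟨(0, 0), by simp [pW], by simpa [pW, Prod.mk_zero_zero] using h1 u⟩
    · by_cases hu : c u = Tile.Y
      · exact ⟨(1, 0), by simp [pYB], by simpa [pYB, add_comm] using h2 u hu⟩
      · exact ⟨(0, 0), by simp [pYB], by simpa [pYB, Prod.mk_zero_zero] using hu⟩
    · by_cases hu : c u = Tile.B
      · exact ⟨(1, 0), by simp [pBY], by simpa [pBY, add_comm] using h3 u hu⟩
      · exact ⟨(0, 0), by simp [pBY], by simpa [pBY, Prod.mk_zero_zero] using hu⟩
    · by_cases hu : c u = Tile.B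
      · exact ⟨(0, 1), by simp [pBbelowY], by simpa [pBbelowY, add_comm] using h4 u hu⟩
      · exact ⟨(0, 0), by simp [pBbelowY], by simpa [pBbelowY, Prod.mk_zero_zero] using hu⟩

end Aux
lemma classify (c : ℤ × ℤ → Tile) : exampleSystem.Valid c ↔
    (c = fun _ => Tile.Y) ∨ (c = fun _ => Tile.B) ∨
      ∃ h : ℤ, c = fun x => if x.2 < h then Tile.Y else Tile.B := by
  rw [valid_iff']
  constructor
  · rintro ⟨h1, h2, h3, h4⟩
    -- horizontal constancy
    have hstep : ∀ x : ℤ × ℤ, c (x + (1, 0)) = c x := by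
      intro x
      cases hx : c x with
      | Y =>
        have hB := h2 x hx
        have hW := h1 (x + (1, 0))
        cases hxx : c (x + (1, 0)) <;> simp_all
      | B =>
        have hY := h3 x hx
        have hW := h1 (x + (1, 0))
        cases hxx : c (x + (1, 0)) <;> simp_all
      | W => exact absurd hx (h1 x)
    have hrow : ∀ a b : ℤ, c (a, b) = c (0, b) := by
      intro a b
      induction a using Int.induction_on with
      | zero => rfl
      | succ n ih =>
        have := hstep ((n : ℤ), b)
        simpa [Prod.ext_iff, add_comm] using this.trans ih
      | pred n ih =>
        have := hstep ((-(n : ℤ) - 1), b)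
        rw [show ((-(n:ℤ) - 1, b) + (1, 0)) = (-(n:ℤ), b) by rw [Prod.mk_add_mk]; norm_num] at this
        exact this.symm.trans ih
    have hup : ∀ y : ℤ, c (0, y) = Tile.B → c (0, y + 1) = Tile.B := by
      intro y hy
      have hY := h4 (0, y) hy
      have hW := h1 ((0, y) + (0, 1))
      rw [show ((0:ℤ), y) + (0, 1) = (0, y + 1) by simp] at hY hW
      cases hxx : c (0, y + 1) <;> simp_all
    have hmono : ∀ y y' : ℤ, y ≤ y' → c (0, y) = Tile.B → c (0, y') = Tile.B := by
      intro y y' hle hy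
      obtain ⟨n, rfl⟩ := Int.le.dest hle
      clear hle
      induction n with
      | zero => simpa using hy
      | succ n ih =>
        rw [show y + ((n + 1 : ℕ) : ℤ) = (y + (n : ℕ)) + 1 by push_cast; ring]
        exact hup _ ih
    by_cases hB : ∃ y, c (0, y) = Tile.B
    · by_cases hY : ∃ y, c (0, y) = Tile.Y
      · -- split tiling
        obtain ⟨y1, hy1⟩ := hY
        have hbdd : ∃ b : ℤ, ∀ z : ℤ, c (0, z) = Tile.B → b ≤ z := by
          refine ⟨y1 + 1, fun z hz => ?_⟩
          by_contra hlt
          push_neg at hlt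
          have := hmono z y1 (by omega) hz
          simp [hy1] at this
        obtain ⟨h, hh, hleast⟩ := Int.exists_least_of_bdd hbdd hB
        refine Or.inr (Or.inr ⟨h, funext fun x => ?_⟩)
        rw [show x = (x.1, x.2) from rfl, hrow]
        by_cases hx2 : x.2 < h
        · simp only [hx2, if_true]
          have hnB : c (0, x.2) ≠ Tile.B := fun hc => by have := hleast _ hc; omega
          have hnW := h1 (0, x.2)
          cases hc : c (0, x.2) <;> simp_all
        · simp only [hx2, if_false]
          exact hmono h x.2 (by omega) hh
      · -- all B
        push_neg at hY
        refine Or.inr (Or.inl (funext fun x => ?_))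
        rw [show x = (x.1, x.2) from rfl, hrow]
        have := hY x.2
        have hW := h1 (0, x.2)
        cases hc : c (0, x.2) <;> simp_all
    · -- all Y
      push_neg at hB
      refine Or.inl (funext fun x => ?_)
      rw [show x = (x.1, x.2) from rfl, hrow]
      have := hB x.2
      have hW := h1 (0, x.2)
      cases hc : c (0, x.2) <;> simp_all
  · rintro (rfl | rfl | ⟨h, rfl⟩)
    · refine ⟨fun x => by simp, fun x hx => by simp, fun x hx => by simp at hx, fun x hx => by simp at hx⟩
    · refine ⟨fun x => by simp, fun x hx => by simp at hx, fun x hx => by simp, fun x hx => by simp⟩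
    · refine ⟨fun x => ?_, fun x hx => ?_, fun x hx => ?_, fun x hx => ?_⟩
      · dsimp only; split <;> simp
      · dsimp only at hx ⊢
        have : x.2 < h := by by_contra hc; simp [hc] at hx
        simp only [Prod.snd_add]
        simp [this]
      · dsimp only at hx ⊢
        have : ¬ x.2 < h := by by_contra hc; simp [hc] at hx
        simp only [Prod.snd_add]
        simp [this]
      · dsimp only at hx ⊢
        have : ¬ x.2 < h := by by_contra hc; simp [hc] at hx
        simp only [Prod.snd_add]
        have : ¬ x.2 + 1 < h := by omega
        simp [this]
lemma split_period_dir (h : ℤ) (v : ℤ × ℤ) (hv : v ≠ 0)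
    (hp : IsPeriod (fun x : ℤ × ℤ => if x.2 < h then Tile.Y else Tile.B) v) :
    dir v = some 0 := by
  have hv2 : v.2 = 0 := by
    by_contra hv2
    rcases lt_or_gt_of_ne hv2 with hneg | hpos
    · have := hp (0, h)
      simp only [Prod.snd_add] at this
      rw [if_pos (by omega), if_neg (by omega)] at this
      exact absurd this (by simp)
    · have := hp (0, h - v.2)
      simp only [Prod.snd_add] at this
      rw [if_neg (by omega), if_pos (by omega)] at this
      exact absurd this (by simp)
  have hv1 : v.1 ≠ 0 := fun hc => hv (Prod.ext hc hv2)
  simp [dir, hv1, hv2]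

lemma slopes_eq : exampleSystem.Slopes = {some 0} := by
  ext θ
  simp only [Set.mem_singleton_iff, TilingSystem.Slopes, Set.mem_setOf_eq]
  constructor
  · rintro ⟨c, hval, ⟨⟨v, hv0, hvp, hvd⟩, hall⟩⟩
    rcases (classify c).1 hval with rfl | rfl | ⟨h, rfl⟩
    · have h1 := hall (1, 0) (by simp [Prod.ext_iff]) (fun x => rfl)
      have h2 := hall (0, 1) (by simp [Prod.ext_iff]) (fun x => rfl)
      rw [dir] at h1 h2
      simp at h1 h2
      rw [← h1] at h2
      exact absurd h2 (by simp)
    · have h1 := hall (1, 0) (by simp [Prod.ext_iff]) (fun x => rfl)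
      have h2 := hall (0, 1) (by simp [Prod.ext_iff]) (fun x => rfl)
      rw [dir] at h1 h2
      simp at h1 h2
      rw [← h1] at h2
      exact absurd h2 (by simp)
    · rw [← hvd]
      exact split_period_dir h v hv0 hvp
  · rintro rfl
    refine ⟨fun x : ℤ × ℤ => if x.2 < 0 then Tile.Y else Tile.B,
      (classify _).2 (Or.inr (Or.inr ⟨0, rfl⟩)), ⟨⟨(1, 0), by simp [Prod.ext_iff], ?_, ?_⟩, ?_⟩⟩
    · intro x
      simp
    · simp [dir]
    · intro v hv0 hvp
      exact split_period_dir 0 v hv0 hvp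
/-- The valid tilings of the example system are the all-`Y` tiling, the all-`B` tiling
and the split tilings `c_h`; consequently its set of slopes is `{0}`. -/
theorem exampleSystem_valid_and_slopes :
    (∀ c : ℤ × ℤ → Tile, exampleSystem.Valid c ↔
      (c = fun _ => Tile.Y) ∨ (c = fun _ => Tile.B) ∨
        ∃ h : ℤ, c = fun x => if x.2 < h then Tile.Y else Tile.B) ∧
    exampleSystem.Slopes = {some 0} := by
  exact ⟨classify, slopes_eq⟩
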